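/- arXiv:2304.09134 — 6 statements merged into one kernel-verified Lean document; each statement's English description precedes it below -/
import Mathlib

section
/- Define polynomials f_n(x) over the reals by f_0 = 1, f_1 = x - α, and f_n = (x - 2α) f_{n-1} - (1-α)^2 f_{n-2} for n ≥ 2, where α is a fixed real parameter. Then for all positive integers a, b with a + b = n, the polynomial f_a f_b - (1-α)^2 f_{a-1} f_{b-1} does not depend on the choice of a and b; that is, for any positive integers a, b, c, d with a + b = c + d = n, one has f_a f_b - (1-α)^2 f_{a-1} f_{b-1} = f_c f_d - (1-α)^2 f_{c-1} f_{d-1}. -/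
open Polynomial

/-- The polynomials `f_n`: characteristic polynomials of the principal submatrix of
`A_α(P_{n+1})` obtained by deleting an end vertex. -/
noncomputable def f (α : ℝ) : ℕ → Polynomial ℝ
  | 0 => 1
  | 1 => X - C α
  | n + 2 => (X - C (2 * α)) * f α (n + 1) - C ((1 - α) ^ 2) * f α n

lemma f_step (α : ℝ) (a b : ℕ) :
    f α (a + 1) * f α (b + 2) - C ((1 - α) ^ 2) * f α a * f α (b + 1) =
      f α (a + 2) * f α (b + 1) - C ((1 - α) ^ 2) * f α (a + 1) * f α b := by
  rw [show f α (b + 2) = (X - C (2 * α)) * f α (b + 1) - C ((1 - α) ^ 2) * f α b from rfl,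
    show f α (a + 2) = (X - C (2 * α)) * f α (a + 1) - C ((1 - α) ^ 2) * f α a from rfl]
  ring

lemma f_key (α : ℝ) (a b : ℕ) :
    f α (a + 1) * f α (b + 1) - C ((1 - α) ^ 2) * f α a * f α b =
      f α 1 * f α (a + b + 1) - C ((1 - α) ^ 2) * f α 0 * f α (a + b) := by
  induction a generalizing b with
  | zero => simp
  | succ a ih =>
    have h := f_step α a b
    rw [show a + 1 + 1 = a + 2 from rfl, show a + 1 + b + 1 = a + (b + 1) + 1 by omega,
      show a + 1 + b = a + (b + 1) by omega, ← ih (b + 1)]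
    exact h.symm

theorem stmt0 (α : ℝ) (hα : 0 ≤ α ∧ α < 1) (n a b c d : ℕ)
    (ha : 0 < a) (hb : 0 < b) (hc : 0 < c) (hd : 0 < d)
    (hab : a + b = n) (hcd : c + d = n) :
    f α a * f α b - C ((1 - α) ^ 2) * f α (a - 1) * f α (b - 1) =
      f α c * f α d - C ((1 - α) ^ 2) * f α (c - 1) * f α (d - 1) := by
  obtain ⟨a, rfl⟩ := Nat.exists_eq_add_of_lt ha
  obtain ⟨b, rfl⟩ := Nat.exists_eq_add_of_lt hb
  obtain ⟨c, rfl⟩ := Nat.exists_eq_add_of_lt hc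
  obtain ⟨d, rfl⟩ := Nat.exists_eq_add_of_lt hd
  simp only [Nat.add_sub_cancel, zero_add]
  have hsum : a + b = c + d := by omega
  calc f α (a + 1) * f α (b + 1) - C ((1 - α) ^ 2) * f α a * f α b
      = f α 1 * f α (a + b + 1) - C ((1 - α) ^ 2) * f α 0 * f α (a + b) := f_key α a b
    _ = f α 1 * f α (c + d + 1) - C ((1 - α) ^ 2) * f α 0 * f α (c + d) := by rw [hsum]
    _ = _ := (f_key α c d).symm
end

section
/- Let α ∈ [0,1) and define f_0 = 1, f_1 = x - α, f_n = (x - 2α) f_{n-1} - (1-α)^2 f_{n-2}. For positive integers a ≥ b with a = b + l (l ≥ 1), the telescoping identity f_a f_{b-1} - f_{a-1} f_b = -(1-α)^{2(b-1)} (α f_l + (1-α)^2 f_{l-1}) holds as an identity of polynomials in x. -/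
open Polynomial

lemma key (α : ℝ) (m : ℕ) : ∀ k : ℕ,
    f α (k + 1 + (m + 1)) * f α k - f α (k + (m + 1)) * f α (k + 1) =
      -(C ((1 - α) ^ (2 * k)) * (C α * f α (m + 1) + C ((1 - α) ^ 2) * f α m)) := by
  intro k
  induction k with
  | zero =>
    rw [show 0 + 1 + (m + 1) = m + 2 from by omega, show 0 + (m + 1) = m + 1 from by omega,
      show (0:ℕ) + 1 = 1 from rfl]
    rw [show f α (m + 2) = (X - C (2 * α)) * f α (m + 1) - C ((1 - α) ^ 2) * f α m from rfl]
    rw [show (2 * α) = α + α by ring, C_add]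
    simp only [f, Nat.mul_zero, pow_zero, C_1]
    ring
  | succ k ih =>
    have h1 : f α (k + 1 + 1 + (m + 1)) =
        (X - C (2 * α)) * f α (k + (m + 1) + 1) - C ((1 - α) ^ 2) * f α (k + (m + 1)) := by
      have : k + 1 + 1 + (m + 1) = k + (m + 1) + 2 := by ring
      rw [this]; rfl
    have h2 : f α (k + 1 + 1) = (X - C (2 * α)) * f α (k + 1) - C ((1 - α) ^ 2) * f α k := rfl
    have h3 : k + 1 + (m + 1) = k + (m + 1) + 1 := by ring
    rw [h1, h2, h3]
    rw [h3] at ih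
    have hp : C ((1 - α) ^ (2 * (k + 1))) = C ((1 - α) ^ (2 * k)) * C ((1 - α) ^ 2) := by
      rw [← C_mul, ← pow_add]; ring_nf
    rw [hp]
    linear_combination (C ((1 - α) ^ 2) : Polynomial ℝ) * ih

theorem stmt1 (α : ℝ) (hα : 0 ≤ α ∧ α < 1) (a b l : ℕ)
    (hb : 0 < b) (hl : 0 < l) (ha : a = b + l) :
    f α a * f α (b - 1) - f α (a - 1) * f α b =
      -(C ((1 - α) ^ (2 * (b - 1))) * (C α * f α l + C ((1 - α) ^ 2) * f α (l - 1))) := by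
  obtain ⟨k, rfl⟩ := Nat.exists_eq_add_of_lt hb
  obtain ⟨m, rfl⟩ := Nat.exists_eq_add_of_lt hl
  subst ha
  simp only [zero_add]
  rw [show k + 1 + (m + 1) - 1 = k + (m + 1) from by omega, show k + 1 - 1 = k from rfl,
    show m + 1 - 1 = m from rfl]
  exact key α m k
end

section
/- Let α ∈ [0,1) and let f_n be defined by f_0 = 1, f_1 = x - α, f_n = (x - 2α) f_{n-1} - (1-α)^2 f_{n-2}. Let θ_l denote the largest real root of f_l. Then for positive integers a, b, l with a = b + l, and for every real x ≥ θ_l, we have f_{a-1}(x) f_b(x) > f_a(x) f_{b-1}(x). -/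
open Polynomial Filter

lemma f_eval (α x : ℝ) (n : ℕ) :
    (f α (n + 2)).eval x = (x - 2 * α) * (f α (n + 1)).eval x - (1 - α) ^ 2 * (f α n).eval x := by
  simp [f]

lemma f_monic (α : ℝ) : ∀ n, (f α n).Monic ∧ (f α n).natDegree = n := by
  intro n
  induction n using Nat.strong_induction_on with
  | _ n ih =>
    match n with
    | 0 => exact ⟨monic_one, natDegree_one⟩
    | 1 => exact ⟨monic_X_sub_C α, natDegree_X_sub_C α⟩
    | n + 2 =>
      obtain ⟨hm1, hd1⟩ := ih (n + 1) (by omega)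
      obtain ⟨hm0, hd0⟩ := ih n (by omega)
      have hA : ((X - C (2 * α)) * f α (n + 1)).Monic := (monic_X_sub_C _).mul hm1
      have hdA : ((X - C (2 * α)) * f α (n + 1)).natDegree = n + 2 := by
        rw [natDegree_mul (monic_X_sub_C _).ne_zero hm1.ne_zero, natDegree_X_sub_C, hd1]
        omega
      have hdB : (C ((1 - α) ^ 2) * f α n).natDegree < n + 2 := by
        have := natDegree_C_mul_le ((1 - α) ^ 2) (f α n)
        omega
      have hdB' : (C ((1 - α) ^ 2) * f α n).degree <
          ((X - C (2 * α)) * f α (n + 1)).degree := by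
        rw [degree_eq_natDegree hA.ne_zero, hdA]
        calc (C ((1 - α) ^ 2) * f α n).degree ≤ (C ((1 - α) ^ 2) * f α n).natDegree :=
              degree_le_natDegree
        _ < ((n + 2 : ℕ) : WithBot ℕ) := by exact_mod_cast hdB
      constructor
      · exact hA.sub_of_left hdB'
      · show ((X - C (2 * α)) * f α (n + 1) - C ((1 - α) ^ 2) * f α n).natDegree = n + 2
        rw [natDegree_sub_eq_left_of_natDegree_lt (by omega : (C ((1 - α) ^ 2) * f α n).natDegree < ((X - C (2 * α)) * f α (n + 1)).natDegree), hdA]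

lemma f_tendsto (α : ℝ) (n : ℕ) (hn : 0 < n) :
    Tendsto (fun x => (f α n).eval x) atTop atTop := by
  obtain ⟨hm, hd⟩ := f_monic α n
  apply Polynomial.tendsto_atTop_of_leadingCoeff_nonneg
  · rw [degree_eq_natDegree hm.ne_zero, hd]; exact_mod_cast hn
  · rw [hm.leadingCoeff]; norm_num

/-- Beyond the greatest root, f is positive. -/
lemma f_pos_of_gt (α : ℝ) (n : ℕ) (hn : 0 < n) (θ : ℝ)
    (hθ : IsGreatest {x : ℝ | (f α n).eval x = 0} θ) :
    ∀ x : ℝ, θ < x → 0 < (f α n).eval x := by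
  intro x hx
  by_contra h
  push_neg at h
  rcases lt_or_eq_of_le h with h | h
  · obtain ⟨y, hy⟩ := ((f_tendsto α n hn).eventually_ge_atTop 1).exists_forall_of_atTop
    have hxy : x ≤ max y x := le_max_right _ _
    have hyval : (1 : ℝ) ≤ (f α n).eval (max y x) := hy _ (le_max_left _ _)
    have hcont : ContinuousOn (fun t => (f α n).eval t) (Set.Icc x (max y x)) :=
      ((f α n).continuous_aeval).continuousOn
    have : (0 : ℝ) ∈ Set.Icc ((f α n).eval x) ((f α n).eval (max y x)) :=
      ⟨le_of_lt h, by linarith⟩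
    obtain ⟨z, hz, hz0⟩ := intermediate_value_Icc hxy hcont this
    exact absurd (hθ.2 hz0) (by linarith [hz.1])
  · exact absurd (hθ.2 h) (not_le.mpr hx)

/-- Main inductive structure: existence of greatest root and positivity of predecessor. -/
lemma f_key_s2 (α : ℝ) (hα0 : 0 ≤ α) (hα1 : α < 1) :
    ∀ n : ℕ, ∃ θ : ℝ, IsGreatest {x : ℝ | (f α (n + 1)).eval x = 0} θ ∧
      ∀ x : ℝ, θ ≤ x → 0 < (f α n).eval x := by
  intro n
  induction n with
  | zero =>
    refine ⟨α, ⟨?_, ?_⟩, ?_⟩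
    · simp [f]
    · intro x hx
      simp only [f, eval_sub, eval_X, eval_C, Set.mem_setOf_eq] at hx
      linarith
    · intro x _; simp [f]
  | succ n ih =>
    obtain ⟨θ, hθ, hpos⟩ := ih
    have hθroot : (f α (n + 1)).eval θ = 0 := hθ.1
    have hcsq : (0 : ℝ) < (1 - α) ^ 2 := pow_pos (by linarith) 2
    have hneg : (f α (n + 2)).eval θ < 0 := by
      rw [f_eval, hθroot]
      have := hpos θ le_rfl
      nlinarith
    -- f_(n+2) has a root > θ
    obtain ⟨y, hy⟩ := ((f_tendsto α (n + 2) (by omega)).eventually_ge_atTop 1).exists_forall_of_atTop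
    have hθy : θ ≤ max y θ := le_max_right _ _
    have hyval : (1 : ℝ) ≤ (f α (n + 2)).eval (max y θ) := hy _ (le_max_left _ _)
    have hcont : ContinuousOn (fun t => (f α (n + 2)).eval t) (Set.Icc θ (max y θ)) :=
      ((f α (n + 2)).continuous_aeval).continuousOn
    obtain ⟨r, hr, hr0⟩ := intermediate_value_Icc hθy hcont
      (⟨le_of_lt hneg, by linarith⟩ : (0 : ℝ) ∈ Set.Icc _ _)
    have hrθ : θ < r := by
      rcases lt_or_eq_of_le hr.1 with h | h
      · exact h
      · exfalso; rw [← h] at hr0; simp only at hr0; linarith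
    -- greatest root of f_(n+2)
    have hne : f α (n + 2) ≠ 0 := (f_monic α (n + 2)).1.ne_zero
    have hroots_ne : (f α (n + 2)).roots.toFinset.Nonempty := by
      refine ⟨r, Multiset.mem_toFinset.mpr ?_⟩
      rw [mem_roots hne]
      exact hr0
    set θ' := (f α (n + 2)).roots.toFinset.max' hroots_ne with hθ'def
    have hθ'root : (f α (n + 2)).eval θ' = 0 := by
      have := (f α (n + 2)).roots.toFinset.max'_mem hroots_ne
      rw [Multiset.mem_toFinset, mem_roots hne] at this
      exact this
    have hθ'ub : ∀ x ∈ {x : ℝ | (f α (n + 2)).eval x = 0}, x ≤ θ' := by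
      intro x hx
      exact Finset.le_max' _ x (Multiset.mem_toFinset.mpr ((mem_roots hne).mpr hx))
    have hrθ' : r ≤ θ' := hθ'ub r hr0
    refine ⟨θ', ⟨hθ'root, hθ'ub⟩, ?_⟩
    intro x hx
    exact f_pos_of_gt α (n + 1) (by omega) θ hθ x (lt_of_lt_of_le hrθ (le_trans hrθ' hx))

/-- Casoratian identity. -/
lemma f_casorati (α x : ℝ) (k : ℕ) : ∀ m : ℕ,
    (f α (m + k + 1)).eval x * (f α (m + 1)).eval x
      - (f α (m + k + 2)).eval x * (f α m).eval x
    = (1 - α) ^ (2 * m) * (α * (f α (k + 1)).eval x + (1 - α) ^ 2 * (f α k).eval x) := by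
  intro m
  induction m with
  | zero =>
    have h1 : (f α 1).eval x = x - α := by simp [f]
    have h0 : (f α 0).eval x = 1 := by simp [f]
    rw [show 0 + k + 1 = k + 1 by ring, show 0 + k + 2 = k + 2 by ring, h1, h0,
      f_eval α x k]
    ring
  | succ m ih =>
    have e1 : (f α (m + 1 + k + 2)).eval x
        = (x - 2 * α) * (f α (m + k + 2)).eval x - (1 - α) ^ 2 * (f α (m + k + 1)).eval x := by
      have := f_eval α x (m + k + 1)
      convert this using 3 <;> omega
    have e2 := f_eval α x m
    have e3 : (m + 1 + k + 1) = m + k + 2 := by omega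
    rw [e3, e1, show m + 1 + 1 = m + 2 from rfl, e2]
    rw [show 2 * (m + 1) = 2 * m + 2 by ring, pow_add]
    nlinarith [ih]

theorem stmt2 (α : ℝ) (hα : 0 ≤ α ∧ α < 1) (a b l : ℕ)
    (hb : 0 < b) (hl : 0 < l) (ha : a = b + l)
    (θ : ℝ) (hθ : IsGreatest {x : ℝ | (f α l).eval x = 0} θ) :
    ∀ x : ℝ, θ ≤ x →
      (f α a).eval x * (f α (b - 1)).eval x < (f α (a - 1)).eval x * (f α b).eval x := by
  obtain ⟨hα0, hα1⟩ := hα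
  obtain ⟨m, rfl⟩ : ∃ m, b = m + 1 := ⟨b - 1, by omega⟩
  obtain ⟨k, rfl⟩ : ∃ k, l = k + 1 := ⟨l - 1, by omega⟩
  obtain ⟨θ', hθ', hpos⟩ := f_key_s2 α hα0 hα1 k
  have hθeq : θ = θ' := hθ.unique hθ'
  subst hθeq
  intro x hx
  have hkpos : 0 ≤ (f α (k + 1)).eval x := by
    rcases lt_or_eq_of_le hx with h | h
    · exact le_of_lt (f_pos_of_gt α (k + 1) (by omega) θ hθ x h)
    · rw [← h]; exact le_of_eq hθ.1.symm
  have hfk : 0 < (f α k).eval x := hpos x hx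
  have hcsq : (0 : ℝ) < (1 - α) ^ 2 := pow_pos (by linarith) 2
  have hD : 0 < α * (f α (k + 1)).eval x + (1 - α) ^ 2 * (f α k).eval x := by
    nlinarith
  have hpow : (0 : ℝ) < (1 - α) ^ (2 * m) := pow_pos (by linarith) _
  have := f_casorati α x k m
  have hgoal : 0 < (f α (m + k + 1)).eval x * (f α (m + 1)).eval x
      - (f α (m + k + 2)).eval x * (f α m).eval x := by
    rw [this]; exact mul_pos hpow hD
  have ea : a = m + k + 2 := by omega
  have ea1 : a - 1 = m + k + 1 := by omega
  have eb1 : m + 1 - 1 = m := by omega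
  rw [ea1, ea, show m + 1 - 1 = m from rfl]
  linarith
end

section
/- Let A and B be nonnegative symmetric real n × n matrices with A ≥ B entrywise and A ≠ B. Then for every real x ≥ ρ(A) (the spectral radius of A), det(xI - B) ≥ det(xI - A). Moreover, if A is irreducible, then the inequality is strict for all x ≥ ρ(A). -/
/-- The spectral radius of a real matrix: the largest modulus of a (complex) eigenvalue. -/
noncomputable def specRad {n : ℕ} (A : Matrix (Fin n) (Fin n) ℝ) : ℝ :=
  sSup (Set.image (fun z : ℂ => ‖z‖) (spectrum ℂ (A.map (fun r => (r : ℂ)))))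

/-- A matrix is irreducible if for all indices `i j` some power has positive `(i,j)` entry. -/
def Irred {n : ℕ} (A : Matrix (Fin n) (Fin n) ℝ) : Prop :=
  ∀ i j, ∃ k : ℕ, 0 < k ∧ 0 < (A ^ k) i j

open Matrix Polynomial Finset

namespace PF

variable {m : ℕ} {U A : Matrix (Fin m) (Fin m) ℝ} {eig : Fin m → ℝ}

lemma quad_expand (A : Matrix (Fin m) (Fin m) ℝ) (v : Fin m → ℝ) :
    v ⬝ᵥ (A *ᵥ v) = ∑ i, ∑ j, v i * (A i j * v j) := by
  simp [dotProduct, Matrix.mulVec, Finset.mul_sum]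

lemma dot_self_nonneg (v : Fin m → ℝ) : 0 ≤ v ⬝ᵥ v :=
  Finset.sum_nonneg fun i _ => mul_self_nonneg (v i)

lemma eval_charpoly_det (M : Matrix (Fin m) (Fin m) ℝ) (x : ℝ) :
    (M.charpoly).eval x = (Matrix.scalar (Fin m) x - M).det := by
  unfold Matrix.charpoly
  rw [← Polynomial.coe_evalRingHom, RingHom.map_det]
  congr 1
  ext i j
  by_cases h : i = j <;>
    simp [Matrix.charmatrix_apply, Matrix.scalar_apply, Matrix.diagonal_apply, h]


lemma dotU (hU2 : Uᵀ * U = 1) (a b : Fin m → ℝ) :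
    (U *ᵥ a) ⬝ᵥ (U *ᵥ b) = a ⬝ᵥ b := by
  rw [Matrix.dotProduct_mulVec, ← Matrix.mulVec_transpose, Matrix.mulVec_mulVec, hU2,
    Matrix.one_mulVec]

lemma surjU (hU1 : U * Uᵀ = 1) (v : Fin m → ℝ) : U *ᵥ (Uᵀ *ᵥ v) = v := by
  rw [Matrix.mulVec_mulVec, hU1, Matrix.one_mulVec]


lemma mulAU (hU2 : Uᵀ * U = 1) (hAU : A = U * Matrix.diagonal eig * Uᵀ) :
    A * U = U * Matrix.diagonal eig := by
  rw [hAU, Matrix.mul_assoc, Matrix.mul_assoc, hU2, Matrix.mul_one]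

lemma quad_coord (hU2 : Uᵀ * U = 1) (hAU : A = U * Matrix.diagonal eig * Uᵀ)
    (w : Fin m → ℝ) :
    (U *ᵥ w) ⬝ᵥ (A *ᵥ (U *ᵥ w)) = ∑ i, eig i * (w i * w i) := by
  rw [Matrix.mulVec_mulVec, mulAU hU2 hAU, ← Matrix.mulVec_mulVec, dotU hU2]
  simp [dotProduct, Matrix.mulVec_diagonal]
  exact Finset.sum_congr rfl fun i _ => by ring

lemma dot_coord (hU2 : Uᵀ * U = 1) (w : Fin m → ℝ) :
    (U *ᵥ w) ⬝ᵥ (U *ᵥ w) = ∑ i, w i * w i := by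
  rw [dotU hU2]; rfl

lemma rayleigh_le (hU1 : U * Uᵀ = 1) (hU2 : Uᵀ * U = 1)
    (hAU : A = U * Matrix.diagonal eig * Uᵀ) {c : ℝ} (hc : ∀ i, eig i ≤ c)
    (v : Fin m → ℝ) : v ⬝ᵥ (A *ᵥ v) ≤ c * (v ⬝ᵥ v) := by
  obtain ⟨w, rfl⟩ : ∃ w, v = U *ᵥ w := ⟨Uᵀ *ᵥ v, (surjU hU1 v).symm⟩
  rw [quad_coord hU2 hAU, dot_coord hU2, Finset.mul_sum]
  exact Finset.sum_le_sum fun i _ =>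
    mul_le_mul_of_nonneg_right (hc i) (mul_self_nonneg _)

lemma attain (hU2 : Uᵀ * U = 1) (hAU : A = U * Matrix.diagonal eig * Uᵀ) (j : Fin m) :
    ∃ v : Fin m → ℝ, v ⬝ᵥ (A *ᵥ v) = eig j ∧ v ⬝ᵥ v = 1 := by
  refine ⟨U *ᵥ (Pi.single j 1 : Fin m → ℝ), ?_, ?_⟩
  · rw [quad_coord hU2 hAU]
    have h : ∀ i, eig i * ((Pi.single j 1 : Fin m → ℝ) i * (Pi.single j 1 : Fin m → ℝ) i)
        = if i = j then eig j else 0 := by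
      intro i; by_cases h : i = j <;> simp [Pi.single_apply, h]
    simp [h]
  · rw [dot_coord hU2]
    have h : ∀ i, (Pi.single j 1 : Fin m → ℝ) i * (Pi.single j 1 : Fin m → ℝ) i
        = if i = j then 1 else 0 := by
      intro i; by_cases h : i = j <;> simp [Pi.single_apply, h]
    simp [h]

lemma eigvec_of_quad_eq (hU1 : U * Uᵀ = 1) (hU2 : Uᵀ * U = 1)
    (hAU : A = U * Matrix.diagonal eig * Uᵀ) {c : ℝ} (hc : ∀ i, eig i ≤ c)
    {v : Fin m → ℝ} (hq : v ⬝ᵥ (A *ᵥ v) = c * (v ⬝ᵥ v)) :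
    A *ᵥ v = c • v := by
  obtain ⟨w, rfl⟩ : ∃ w, v = U *ᵥ w := ⟨Uᵀ *ᵥ v, (surjU hU1 v).symm⟩
  rw [quad_coord hU2 hAU, dot_coord hU2, Finset.mul_sum] at hq
  have hz : ∀ i ∈ Finset.univ, (c - eig i) * (w i * w i) = 0 := by
    rw [← Finset.sum_eq_zero_iff_of_nonneg]
    · rw [Finset.sum_congr rfl (fun i _ => by ring : ∀ i ∈ Finset.univ,
        (c - eig i) * (w i * w i) = c * (w i * w i) - eig i * (w i * w i)),
        Finset.sum_sub_distrib, sub_eq_zero]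
      linarith [hq]
    · intro i _
      exact mul_nonneg (sub_nonneg.mpr (hc i)) (mul_self_nonneg _)
  have hDw : Matrix.diagonal eig *ᵥ w = c • w := by
    funext i
    have := hz i (Finset.mem_univ i)
    rcases mul_eq_zero.mp this with h | h
    · simp [Matrix.mulVec_diagonal, sub_eq_zero.mp h]
    · have hw : w i = 0 := by nlinarith [mul_self_nonneg (w i)]
      simp [Matrix.mulVec_diagonal, hw]
  rw [Matrix.mulVec_mulVec, mulAU hU2 hAU, ← Matrix.mulVec_mulVec, hDw,
    Matrix.mulVec_smul]

lemma charpoly_eval_prod (hU1 : U * Uᵀ = 1) (hU2 : Uᵀ * U = 1)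
    (hAU : A = U * Matrix.diagonal eig * Uᵀ) (x : ℝ) :
    (A.charpoly).eval x = ∏ i, (x - eig i) := by
  have hscal : Matrix.scalar (Fin m) x - A
      = U * (Matrix.diagonal fun i => x - eig i) * Uᵀ := by
    have h1 : Matrix.scalar (Fin m) x = U * Matrix.diagonal (fun _ => x) * Uᵀ := by
      have h2 : Matrix.diagonal (fun _ : Fin m => x) = x • (1 : Matrix (Fin m) (Fin m) ℝ) := by
        ext i j
        by_cases h : i = j <;> simp [Matrix.diagonal_apply, Matrix.one_apply, h]
      rw [Matrix.scalar_apply, h2, Matrix.mul_smul, Matrix.mul_one, Matrix.smul_mul, hU1]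
    rw [h1, hAU, ← Matrix.sub_mul, ← Matrix.mul_sub, Matrix.diagonal_sub]
  rw [eval_charpoly_det, hscal, Matrix.det_mul, Matrix.det_mul]
  have h3 : (U.det * (Matrix.diagonal fun i => x - eig i).det) * Uᵀ.det
      = (Matrix.diagonal fun i => x - eig i).det * (U.det * Uᵀ.det) := by ring
  rw [h3, ← Matrix.det_mul, hU1, Matrix.det_one, mul_one, Matrix.det_diagonal]



lemma isHerm {A : Matrix (Fin m) (Fin m) ℝ} (h : A.IsSymm) : A.IsHermitian := by
  rw [Matrix.IsHermitian, Matrix.conjTranspose_eq_transpose_of_trivial]; exact h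

lemma spectral_real {A : Matrix (Fin m) (Fin m) ℝ} (hA : A.IsHermitian) :
    ∃ U : Matrix (Fin m) (Fin m) ℝ, U * Uᵀ = 1 ∧ Uᵀ * U = 1 ∧
      A = U * Matrix.diagonal hA.eigenvalues * Uᵀ := by
  refine ⟨(Matrix.IsHermitian.eigenvectorUnitary hA : Matrix (Fin m) (Fin m) ℝ), ?_, ?_, ?_⟩
  · have := (Unitary.mem_iff.mp (Matrix.IsHermitian.eigenvectorUnitary hA).2).2
    rwa [Matrix.star_eq_conjTranspose, Matrix.conjTranspose_eq_transpose_of_trivial] at this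
  · have := (Unitary.mem_iff.mp (Matrix.IsHermitian.eigenvectorUnitary hA).2).1
    rwa [Matrix.star_eq_conjTranspose, Matrix.conjTranspose_eq_transpose_of_trivial] at this
  · have h := hA.spectral_theorem
    rwa [Unitary.conjStarAlgAut_apply, Matrix.star_eq_conjTranspose,
      Matrix.conjTranspose_eq_transpose_of_trivial,
      show (RCLike.ofReal ∘ hA.eigenvalues : Fin m → ℝ) = hA.eigenvalues by
        funext i; simp [RCLike.ofReal]] at h




lemma spectrum_complexify (hU1 : U * Uᵀ = 1) (hU2 : Uᵀ * U = 1)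
    (hAU : A = U * Matrix.diagonal eig * Uᵀ) :
    spectrum ℂ (A.map (fun r => (r : ℂ))) = Set.range (fun i => (eig i : ℂ)) := by
  have hmap : ∀ M N : Matrix (Fin m) (Fin m) ℝ,
      (M * N).map (fun r => (r : ℂ)) = M.map (fun r => (r : ℂ)) * N.map (fun r => (r : ℂ)) :=
    fun M N => Matrix.map_mul (f := Complex.ofRealHom)
  have hone : ((1 : Matrix (Fin m) (Fin m) ℝ)).map (fun r => (r : ℂ)) = 1 :=
    Matrix.map_one _ Complex.ofReal_zero Complex.ofReal_one
  set Uc := U.map (fun r => (r : ℂ))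
  set Utc := Uᵀ.map (fun r => (r : ℂ))
  have h1 : Uc * Utc = 1 := by rw [← hmap, hU1, hone]
  have h2 : Utc * Uc = 1 := by rw [← hmap, hU2, hone]
  let u : (Matrix (Fin m) (Fin m) ℂ)ˣ := ⟨Uc, Utc, h1, h2⟩
  have hAc : A.map (fun r => (r : ℂ))
      = (u : Matrix (Fin m) (Fin m) ℂ) * Matrix.diagonal (fun i => (eig i : ℂ))
        * ((u⁻¹ : (Matrix (Fin m) (Fin m) ℂ)ˣ) : Matrix (Fin m) (Fin m) ℂ) := by
    show A.map _ = Uc * _ * Utc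
    rw [hAU, hmap, hmap, Matrix.diagonal_map Complex.ofReal_zero]
  rw [hAc, spectrum.units_conjugate, spectrum_diagonal]

lemma abs_eig_le {x : ℝ} (hU1 : U * Uᵀ = 1) (hU2 : Uᵀ * U = 1)
    (hAU : A = U * Matrix.diagonal eig * Uᵀ)
    (hx : specRad A ≤ x) (i : Fin m) : |eig i| ≤ x := by
  have hs := spectrum_complexify hU1 hU2 hAU
  have hmem : |eig i| ∈ Set.image (fun z : ℂ => ‖z‖) (spectrum ℂ (A.map (fun r => (r : ℂ)))) := by
    rw [hs]
    exact ⟨(eig i : ℂ), ⟨i, rfl⟩, by simp⟩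
  have hbdd : BddAbove (Set.image (fun z : ℂ => ‖z‖) (spectrum ℂ (A.map (fun r => (r : ℂ))))) := by
    rw [hs]
    exact ((Set.finite_range _).image _).bddAbove
  exact le_trans (le_csSup hbdd hmem) hx



lemma det_updateColumn_single (N : Matrix (Fin (m+1)) (Fin (m+1)) ℝ) (i : Fin (m+1)) :
    (N.updateCol i (Pi.single i 1)).det
      = (N.submatrix i.succAbove i.succAbove).det := by
  rw [Matrix.det_succ_column _ i]
  rw [Finset.sum_eq_single i]
  · have h1 : (N.updateCol i (Pi.single i 1)) i i = 1 := by
      simp [Matrix.updateCol_apply]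
    have h2 : (N.updateCol i (Pi.single i 1)).submatrix i.succAbove i.succAbove
        = N.submatrix i.succAbove i.succAbove := by
      ext k l
      simp [Matrix.updateCol_apply, (Fin.succAbove_ne i l)]
    rw [h1, h2]
    have h3 : (-1 : ℝ) ^ ((i : ℕ) + (i : ℕ)) = 1 := Even.neg_one_pow ⟨i, rfl⟩
    rw [h3]; ring
  · intro k _ hk
    have h0 : (N.updateCol i (Pi.single i 1)) k i = 0 := by
      simp [Matrix.updateCol_apply, Pi.single_apply, hk]
    rw [h0]; ring
  · intro h; exact absurd (Finset.mem_univ i) h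

lemma submatrix_scalar_sub (M : Matrix (Fin (m+1)) (Fin (m+1)) ℝ) (x : ℝ) (i : Fin (m+1)) :
    (Matrix.scalar (Fin (m+1)) x - M).submatrix i.succAbove i.succAbove
      = Matrix.scalar (Fin m) x - M.submatrix i.succAbove i.succAbove := by
  ext k l
  by_cases h : k = l <;>
    simp [Matrix.scalar_apply, Matrix.diagonal_apply, h,
      Fin.succAbove_right_injective.eq_iff]

lemma hasDerivAt_det_scalar_sub (M : Matrix (Fin (m+1)) (Fin (m+1)) ℝ) (x : ℝ) :
    HasDerivAt (fun y => (Matrix.scalar (Fin (m+1)) y - M).det)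
      (∑ i : Fin (m+1),
        (Matrix.scalar (Fin m) x - M.submatrix i.succAbove i.succAbove).det) x := by
  have hfun : (fun y => (Matrix.scalar (Fin (m+1)) y - M).det)
      = fun y => ∑ σ : Equiv.Perm (Fin (m+1)), ((Equiv.Perm.sign σ : ℤ) : ℝ) *
          ∏ j, ((if σ j = j then y else 0) - M (σ j) j) := by
    funext y
    rw [Matrix.det_apply']
    refine Finset.sum_congr rfl fun σ _ => ?_
    congr 1
  rw [hfun]
  have hder : ∀ σ : Equiv.Perm (Fin (m+1)),
      HasDerivAt (fun y => ((Equiv.Perm.sign σ : ℤ) : ℝ) *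
          ∏ j, ((if σ j = j then y else 0) - M (σ j) j))
        (((Equiv.Perm.sign σ : ℤ) : ℝ) * ∑ i : Fin (m+1),
          (∏ j ∈ Finset.univ.erase i, ((if σ j = j then x else 0) - M (σ j) j)) *
            (if σ i = i then (1:ℝ) else 0)) x := by
    intro σ
    apply HasDerivAt.const_mul
    have hp := HasDerivAt.fun_finset_prod (u := Finset.univ)
      (f := fun j y => (if σ j = j then y else 0) - M (σ j) j)
      (f' := fun j => if σ j = j then (1:ℝ) else 0) (x := x) ?_
    · simpa [smul_eq_mul, mul_comm] using hp
    · intro j _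
      by_cases h : σ j = j
      · simpa [h] using (hasDerivAt_id x).sub_const (M (σ j) j)
      · simpa [h] using (hasDerivAt_const x (0:ℝ)).sub_const (M (σ j) j)
  have htot := HasDerivAt.fun_sum (fun σ (_ : σ ∈ Finset.univ) => hder σ)
  refine htot.congr_deriv ?_
  symm
  rw [show (∑ σ : Equiv.Perm (Fin (m+1)), ((Equiv.Perm.sign σ : ℤ) : ℝ) *
      ∑ i : Fin (m+1), (∏ j ∈ Finset.univ.erase i,
        ((if σ j = j then x else 0) - M (σ j) j)) * (if σ i = i then (1:ℝ) else 0))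
      = ∑ i : Fin (m+1), ∑ σ : Equiv.Perm (Fin (m+1)), ((Equiv.Perm.sign σ : ℤ) : ℝ) *
        ((∏ j ∈ Finset.univ.erase i, ((if σ j = j then x else 0) - M (σ j) j)) *
          (if σ i = i then (1:ℝ) else 0)) from by
    rw [Finset.sum_comm]
    exact Finset.sum_congr rfl fun σ _ => Finset.mul_sum _ _ _]
  refine Finset.sum_congr rfl fun i _ => ?_
  rw [← submatrix_scalar_sub, ← det_updateColumn_single, Matrix.det_apply']
  refine Finset.sum_congr rfl fun σ _ => ?_
  congr 1
  rw [← Finset.mul_prod_erase Finset.univ _ (Finset.mem_univ i)]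
  have he : ((Matrix.scalar (Fin (m+1)) x - M).updateCol i (Pi.single i 1)) (σ i) i
      = (if σ i = i then (1:ℝ) else 0) := by
    simp [Matrix.updateCol_apply, Pi.single_apply]
  rw [he, mul_comm]
  congr 1
  refine Finset.prod_congr rfl fun j hj => ?_
  have hji : j ≠ i := Finset.ne_of_mem_erase hj
  rw [Matrix.updateCol_apply, if_neg hji]
  by_cases h : σ j = j <;> simp [Matrix.scalar_apply, Matrix.diagonal_apply, h, Matrix.sub_apply]




lemma quad_ext (A : Matrix (Fin (m+1)) (Fin (m+1)) ℝ) (i : Fin (m+1)) (v : Fin m → ℝ) :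
    (Fin.insertNth i (0:ℝ) v) ⬝ᵥ (A *ᵥ (Fin.insertNth i (0:ℝ) v))
      = v ⬝ᵥ ((A.submatrix i.succAbove i.succAbove) *ᵥ v) := by
  set w : Fin (m+1) → ℝ := Fin.insertNth i (0:ℝ) v with hw
  have hwi : w i = 0 := by rw [hw]; simp
  have hws : ∀ k, w (i.succAbove k) = v k := by
    intro k; rw [hw]; simp
  have hmv : ∀ j : Fin (m+1), (A *ᵥ w) j = ∑ l, A j (i.succAbove l) * v l := by
    intro j
    show (∑ k, A j k * w k) = _
    rw [Fin.sum_univ_succAbove (fun k => A j k * w k) i]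
    simp [hwi, hws]
  show (∑ j, w j * (A *ᵥ w) j) = _
  rw [Fin.sum_univ_succAbove (fun j => w j * (A *ᵥ w) j) i]
  simp only [hwi, hws, zero_mul, zero_add]
  refine Finset.sum_congr rfl fun k _ => ?_
  rw [hmv]
  rfl

lemma dot_ext (i : Fin (m+1)) (v : Fin m → ℝ) :
    (Fin.insertNth i (0:ℝ) v) ⬝ᵥ (Fin.insertNth i (0:ℝ) v) = v ⬝ᵥ v := by
  set w : Fin (m+1) → ℝ := Fin.insertNth i (0:ℝ) v with hw
  have hwi : w i = 0 := by rw [hw]; simp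
  have hws : ∀ k, w (i.succAbove k) = v k := by
    intro k; rw [hw]; simp
  show (∑ j, w j * w j) = _
  rw [Fin.sum_univ_succAbove (fun j => w j * w j) i]
  simp [hwi, hws]
  rfl

lemma isSymm_submatrix {A : Matrix (Fin (m+1)) (Fin (m+1)) ℝ} (h : A.IsSymm)
    (i : Fin (m+1)) : (A.submatrix i.succAbove i.succAbove).IsSymm := by
  unfold Matrix.IsSymm
  ext k l
  simp only [Matrix.transpose_apply, Matrix.submatrix_apply]
  exact h.apply _ _

lemma quad_abs_le {B : Matrix (Fin m) (Fin m) ℝ} (hB0 : ∀ i j, 0 ≤ B i j) (v : Fin m → ℝ) :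
    v ⬝ᵥ (B *ᵥ v) ≤ (fun k => |v k|) ⬝ᵥ (B *ᵥ (fun k => |v k|)) := by
  rw [quad_expand, quad_expand]
  refine Finset.sum_le_sum fun i _ => Finset.sum_le_sum fun j _ => ?_
  calc v i * (B i j * v j) ≤ |v i * (B i j * v j)| := le_abs_self _
    _ = |v i| * (B i j * |v j|) := by
        rw [abs_mul, abs_mul, abs_of_nonneg (hB0 i j)]

lemma quad_mono {A B : Matrix (Fin m) (Fin m) ℝ} (hBA : ∀ i j, B i j ≤ A i j)
    (v : Fin m → ℝ) (hv : ∀ i, 0 ≤ v i) :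
    v ⬝ᵥ (B *ᵥ v) ≤ v ⬝ᵥ (A *ᵥ v) := by
  rw [quad_expand, quad_expand]
  refine Finset.sum_le_sum fun i _ => Finset.sum_le_sum fun j _ => ?_
  have := mul_le_mul_of_nonneg_right (hBA i j) (hv j)
  have := mul_le_mul_of_nonneg_left this (hv i)
  linarith

lemma abs_dot_abs (v : Fin m → ℝ) :
    (fun k => |v k|) ⬝ᵥ (fun k => |v k|) = v ⬝ᵥ v := by
  refine Finset.sum_congr rfl fun i _ => abs_mul_abs_self _

lemma pow_entry_nonneg {A : Matrix (Fin m) (Fin m) ℝ} (hA0 : ∀ i j, 0 ≤ A i j) (k : ℕ) :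
    ∀ i j, 0 ≤ (A ^ k) i j := by
  induction k with
  | zero => intro i j; rw [pow_zero]; by_cases h : i = j <;> simp [Matrix.one_apply, h]
  | succ k ih =>
    intro i j
    rw [pow_succ, Matrix.mul_apply]
    exact Finset.sum_nonneg fun l _ => mul_nonneg (ih i l) (hA0 l j)

lemma pow_mulVec_eig {A : Matrix (Fin m) (Fin m) ℝ} {u : Fin m → ℝ} {c : ℝ}
    (h : A *ᵥ u = c • u) (k : ℕ) : (A ^ k) *ᵥ u = c ^ k • u := by
  induction k with
  | zero => simp
  | succ k ih =>
    rw [pow_succ, ← Matrix.mulVec_mulVec, h, Matrix.mulVec_smul, ih, smul_smul]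
    rw [← pow_succ']


def MonoSt (m : ℕ) : Prop :=
  ∀ A B : Matrix (Fin m) (Fin m) ℝ, A.IsSymm → B.IsSymm →
    (∀ i j, 0 ≤ B i j) → (∀ i j, B i j ≤ A i j) →
    ∀ x0 x : ℝ, (∀ v : Fin m → ℝ, v ⬝ᵥ (A *ᵥ v) ≤ x0 * (v ⬝ᵥ v)) → x0 ≤ x →
    B.charpoly.eval x0 - A.charpoly.eval x0 ≤ B.charpoly.eval x - A.charpoly.eval x

def WeakSt (m : ℕ) : Prop :=
  ∀ A B : Matrix (Fin m) (Fin m) ℝ, A.IsSymm → B.IsSymm →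
    (∀ i j, 0 ≤ B i j) → (∀ i j, B i j ≤ A i j) →
    ∀ x : ℝ, (∀ v : Fin m → ℝ, v ⬝ᵥ (A *ᵥ v) ≤ x * (v ⬝ᵥ v)) →
    A.charpoly.eval x ≤ B.charpoly.eval x

lemma weak_of_mono (m : ℕ) (hP : MonoSt m) : WeakSt m := by
  intro A B hAs hBs hB0 hBA x hx
  rcases Nat.eq_zero_or_pos m with hm | hm
  · subst hm
    have hAB : A = B := by ext i j; exact i.elim0
    rw [hAB]
  · haveI : Nonempty (Fin m) := ⟨⟨0, hm⟩⟩
    have hAh := isHerm hAs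
    have hBh := isHerm hBs
    obtain ⟨U, hU1, hU2, hAU⟩ := spectral_real hAh
    obtain ⟨V, hV1, hV2, hBU⟩ := spectral_real hBh
    obtain ⟨j0, hj0⟩ := Finite.exists_max hAh.eigenvalues
    set x0 := hAh.eigenvalues j0 with hx0def
    obtain ⟨v0, hq0, hn0⟩ := attain hU2 hAU j0
    have hx0x : x0 ≤ x := by
      have h := hx v0; rw [hq0, hn0, mul_one] at h; exact h
    have hBle : ∀ i, hBh.eigenvalues i ≤ x0 := by
      intro i
      obtain ⟨w, hqw, hnw⟩ := attain hV2 hBU i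
      have c1 := quad_abs_le hB0 w
      have c2 := quad_mono hBA (fun k => |w k|) (fun k => abs_nonneg _)
      have c3 := rayleigh_le hU1 hU2 hAU hj0 (fun k => |w k|)
      rw [abs_dot_abs, hnw, mul_one] at c3
      linarith
    have hA0 : A.charpoly.eval x0 = 0 := by
      rw [charpoly_eval_prod hU1 hU2 hAU]
      exact Finset.prod_eq_zero (Finset.mem_univ j0) (by simp [hx0def])
    have hBnn : 0 ≤ B.charpoly.eval x0 := by
      rw [charpoly_eval_prod hV1 hV2 hBU]
      exact Finset.prod_nonneg fun i _ => sub_nonneg.mpr (hBle i)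
    have hmono := hP A B hAs hBs hB0 hBA x0 x (rayleigh_le hU1 hU2 hAU hj0) hx0x
    linarith

lemma mono_all : ∀ m, MonoSt m := by
  intro m
  induction m with
  | zero =>
    intro A B _ _ _ _ x0 x _ _
    have hAB : A = B := by ext i j; exact i.elim0
    rw [hAB]
    simp
  | succ m IH =>
    have W := weak_of_mono m IH
    intro A B hAs hBs hB0 hBA x0 x hq hx0x
    set F : ℝ → ℝ := fun y => B.charpoly.eval y - A.charpoly.eval y with hFdef
    have hD : ∀ y, HasDerivAt F
        (∑ i : Fin (m+1), ((B.submatrix i.succAbove i.succAbove).charpoly.eval y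
          - (A.submatrix i.succAbove i.succAbove).charpoly.eval y)) y := by
      intro y
      have mk : ∀ M : Matrix (Fin (m+1)) (Fin (m+1)) ℝ,
          HasDerivAt (fun z => M.charpoly.eval z)
            (∑ i : Fin (m+1), (M.submatrix i.succAbove i.succAbove).charpoly.eval y) y := by
        intro M
        have h1 := hasDerivAt_det_scalar_sub M y
        have h2 : (fun z => M.charpoly.eval z)
            = fun z => (Matrix.scalar (Fin (m+1)) z - M).det :=
          funext fun z => eval_charpoly_det M z
        have h3 : (∑ i : Fin (m+1), (M.submatrix i.succAbove i.succAbove).charpoly.eval y)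
            = ∑ i : Fin (m+1), (Matrix.scalar (Fin m) y
                - M.submatrix i.succAbove i.succAbove).det :=
          Finset.sum_congr rfl fun i _ => eval_charpoly_det _ y
        rw [h2, h3]
        exact h1
      have hsub := (mk B).sub (mk A)
      rw [← Finset.sum_sub_distrib] at hsub
      exact hsub
    have hcont : Continuous F := by
      rw [hFdef]
      exact (Polynomial.continuous _).sub (Polynomial.continuous _)
    have hmono := monotoneOn_of_deriv_nonneg (convex_Ici x0) hcont.continuousOn
      (fun y _ => (hD y).differentiableAt.differentiableWithinAt)
      (fun y hy => by
        rw [interior_Ici] at hy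
        rw [(hD y).deriv]
        refine Finset.sum_nonneg fun i _ => ?_
        rw [sub_nonneg]
        refine W _ _ (isSymm_submatrix hAs i) (isSymm_submatrix hBs i)
          (fun a b => hB0 _ _) (fun a b => hBA _ _) y (fun v => ?_)
        calc v ⬝ᵥ (A.submatrix i.succAbove i.succAbove *ᵥ v)
            = (Fin.insertNth i (0:ℝ) v) ⬝ᵥ (A *ᵥ (Fin.insertNth i (0:ℝ) v)) :=
              (quad_ext A i v).symm
          _ ≤ x0 * ((Fin.insertNth i (0:ℝ) v) ⬝ᵥ (Fin.insertNth i (0:ℝ) v)) := hq _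
          _ = x0 * (v ⬝ᵥ v) := by rw [dot_ext i v]
          _ ≤ y * (v ⬝ᵥ v) :=
              mul_le_mul_of_nonneg_right (le_of_lt hy) (dot_self_nonneg v))
    exact hmono Set.self_mem_Ici (Set.mem_Ici.mpr hx0x) hx0x

lemma quad_single (M : Matrix (Fin m) (Fin m) ℝ) (a : Fin m) :
    (Pi.single a 1 : Fin m → ℝ) ⬝ᵥ (M *ᵥ (Pi.single a 1 : Fin m → ℝ)) = M a a := by
  rw [quad_expand]
  rw [Finset.sum_eq_single a]
  · rw [Finset.sum_eq_single a] <;> simp [Pi.single_apply]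
    intro b hb; simp [hb]
  · intro b _ hb
    apply Finset.sum_eq_zero
    intro c _
    simp [Pi.single_apply, hb]
  · intro h; exact absurd (Finset.mem_univ a) h

lemma dot_single (a : Fin m) :
    (Pi.single a 1 : Fin m → ℝ) ⬝ᵥ (Pi.single a 1 : Fin m → ℝ) = 1 := by
  have h : ∀ i, (Pi.single a 1 : Fin m → ℝ) i * (Pi.single a 1 : Fin m → ℝ) i
      = if i = a then 1 else 0 := by
    intro i; by_cases h : i = a <;> simp [Pi.single_apply, h]
  show (∑ i, (Pi.single a 1 : Fin m → ℝ) i * (Pi.single a 1 : Fin m → ℝ) i) = 1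
  simp [h]

lemma eigB_lt {A B : Matrix (Fin m) (Fin m) ℝ}
    (hAs : A.IsSymm) (hBs : B.IsSymm) (hB0 : ∀ i j, 0 ≤ B i j)
    (hBA : ∀ i j, B i j ≤ A i j) (hirr : Irred A) (hne : A ≠ B)
    {U : Matrix (Fin m) (Fin m) ℝ} {eig : Fin m → ℝ}
    (hU1 : U * Uᵀ = 1) (hU2 : Uᵀ * U = 1) (hAU : A = U * Matrix.diagonal eig * Uᵀ)
    {V : Matrix (Fin m) (Fin m) ℝ} {eigB : Fin m → ℝ}
    (hV1 : V * Vᵀ = 1) (hV2 : Vᵀ * V = 1) (hBU : B = V * Matrix.diagonal eigB * Vᵀ)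
    {x0 : ℝ} (hx0 : ∀ i, eig i ≤ x0) :
    ∀ i, eigB i < x0 := by
  intro i
  by_contra hcon
  push_neg at hcon
  obtain ⟨w, hqw, hnw⟩ := attain hV2 hBU i
  set u : Fin m → ℝ := fun k => |w k| with hu
  have hun : u ⬝ᵥ u = 1 := by rw [hu, abs_dot_abs, hnw]
  have hu0 : ∀ k, 0 ≤ u k := fun k => abs_nonneg _
  have c1 : w ⬝ᵥ (B *ᵥ w) ≤ u ⬝ᵥ (B *ᵥ u) := quad_abs_le hB0 w
  have c2 : u ⬝ᵥ (B *ᵥ u) ≤ u ⬝ᵥ (A *ᵥ u) := quad_mono hBA u hu0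
  have c3 : u ⬝ᵥ (A *ᵥ u) ≤ x0 * (u ⬝ᵥ u) := rayleigh_le hU1 hU2 hAU hx0 u
  rw [hun, mul_one] at c3
  have hqa : u ⬝ᵥ (A *ᵥ u) = x0 * (u ⬝ᵥ u) := by
    rw [hun, mul_one]
    linarith
  have heig : A *ᵥ u = x0 • u := eigvec_of_quad_eq hU1 hU2 hAU hx0 hqa
  have hqBA : u ⬝ᵥ (B *ᵥ u) = u ⬝ᵥ (A *ᵥ u) := by
    rw [hqa, hun, mul_one]
    linarith
  have hA0 : ∀ a b, 0 ≤ A a b := fun a b => le_trans (hB0 a b) (hBA a b)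
  obtain ⟨i0, hi0⟩ : ∃ k, 0 < u k := by
    by_contra hcc
    push_neg at hcc
    have hz : ∀ k, u k = 0 := fun k => le_antisymm (hcc k) (hu0 k)
    have : u ⬝ᵥ u = 0 := by
      show (∑ k, u k * u k) = 0
      simp [hz]
    rw [hun] at this
    exact one_ne_zero this
  have hx0nn : 0 ≤ x0 := by
    have h1 := rayleigh_le hU1 hU2 hAU hx0 (Pi.single i0 1 : Fin m → ℝ)
    rw [quad_single, dot_single, mul_one] at h1
    exact le_trans (hA0 i0 i0) h1
  have hmv : ∀ (k : ℕ) (a : Fin m), x0 ^ k * u a = ∑ l, (A ^ k) a l * u l := by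
    intro k a
    exact (congrFun (pow_mulVec_eig heig k) a).symm
  have hx0pos : 0 < x0 := by
    obtain ⟨k, hk, hAk⟩ := hirr i0 i0
    have hge : (A ^ k) i0 i0 * u i0 ≤ ∑ l, (A ^ k) i0 l * u l :=
      Finset.single_le_sum
        (f := fun l => (A ^ k) i0 l * u l)
        (fun l _ => mul_nonneg (pow_entry_nonneg hA0 k _ _) (hu0 l))
        (Finset.mem_univ i0)
    have hpos : 0 < x0 ^ k * u i0 :=
      lt_of_lt_of_le (mul_pos hAk hi0) (le_trans hge (le_of_eq (hmv k i0).symm))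
    rcases eq_or_lt_of_le hx0nn with h | h
    · exfalso
      rw [← h, zero_pow (by omega : k ≠ 0), zero_mul] at hpos
      exact lt_irrefl 0 hpos
    · exact h
  have hupos : ∀ j, 0 < u j := by
    intro j
    obtain ⟨k, hk, hAk⟩ := hirr j i0
    have hge : (A ^ k) j i0 * u i0 ≤ ∑ l, (A ^ k) j l * u l :=
      Finset.single_le_sum
        (f := fun l => (A ^ k) j l * u l)
        (fun l _ => mul_nonneg (pow_entry_nonneg hA0 k _ _) (hu0 l))
        (Finset.mem_univ i0)
    have hpos : 0 < x0 ^ k * u j :=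
      lt_of_lt_of_le (mul_pos hAk hi0) (le_trans hge (le_of_eq (hmv k j).symm))
    have hxk : 0 < x0 ^ k := pow_pos hx0pos k
    nlinarith
  have hzero : ∀ a ∈ Finset.univ, ∀ b ∈ Finset.univ,
      (A a b - B a b) * (u a * u b) = 0 := by
    have hsum : ∑ a, ∑ b, (A a b - B a b) * (u a * u b) = 0 := by
      have e1 : ∀ a ∈ Finset.univ, ∀ b ∈ (Finset.univ : Finset (Fin m)),
          (A a b - B a b) * (u a * u b)
            = u a * (A a b * u b) - u a * (B a b * u b) := fun a _ b _ => by ring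
      rw [Finset.sum_congr rfl fun a ha => Finset.sum_congr rfl fun b hb => e1 a ha b hb]
      rw [Finset.sum_congr rfl fun a (_ : a ∈ Finset.univ) =>
        (Finset.sum_sub_distrib (s := Finset.univ)
          (f := fun b => u a * (A a b * u b)) (g := fun b => u a * (B a b * u b)))]
      rw [Finset.sum_sub_distrib, ← quad_expand, ← quad_expand, hqBA, sub_self]
    intro a ha b hb
    have houter := (Finset.sum_eq_zero_iff_of_nonneg (fun a _ =>
      Finset.sum_nonneg fun b _ => mul_nonneg (sub_nonneg.mpr (hBA a b))
        (mul_nonneg (hu0 a) (hu0 b)))).mp hsum a ha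
    exact (Finset.sum_eq_zero_iff_of_nonneg (fun b _ =>
      mul_nonneg (sub_nonneg.mpr (hBA a b)) (mul_nonneg (hu0 a) (hu0 b)))).mp houter b hb
  apply hne
  ext a b
  have h := hzero a (Finset.mem_univ a) b (Finset.mem_univ b)
  rcases mul_eq_zero.mp h with h1 | h1
  · linarith [sub_eq_zero.mp h1]
  · exact absurd h1 (ne_of_gt (mul_pos (hupos a) (hupos b)))

end PF

theorem stmt4 {n : ℕ} (A B : Matrix (Fin n) (Fin n) ℝ)
    (hAs : A.IsSymm) (hBs : B.IsSymm) (hB0 : ∀ i j, 0 ≤ B i j)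
    (hBA : ∀ i j, B i j ≤ A i j) (hne : A ≠ B) :
    (∀ x : ℝ, specRad A ≤ x → (Matrix.charpoly A).eval x ≤ (Matrix.charpoly B).eval x) ∧
    (Irred A → ∀ x : ℝ, specRad A ≤ x →
      (Matrix.charpoly A).eval x < (Matrix.charpoly B).eval x) := by
  have hAh := PF.isHerm hAs
  have hBh := PF.isHerm hBs
  obtain ⟨U, hU1, hU2, hAU⟩ := PF.spectral_real hAh
  obtain ⟨V, hV1, hV2, hBU⟩ := PF.spectral_real hBh
  constructor
  · intro x hx
    have habs := fun i => PF.abs_eig_le hU1 hU2 hAU hx i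
    exact PF.weak_of_mono n (PF.mono_all n) A B hAs hBs hB0 hBA x
      (PF.rayleigh_le hU1 hU2 hAU (fun i => le_trans (le_abs_self _) (habs i)))
  · intro hirr x hx
    haveI hnen : Nonempty (Fin n) := by
      rcases Nat.eq_zero_or_pos n with h0 | h
      · exfalso
        apply hne
        subst h0
        ext i j
        exact i.elim0
      · exact ⟨⟨0, h⟩⟩
    have habs := fun i => PF.abs_eig_le hU1 hU2 hAU hx i
    obtain ⟨j0, hj0⟩ := Finite.exists_max hAh.eigenvalues
    set x0 := hAh.eigenvalues j0 with hx0def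
    have hx0x : x0 ≤ x := le_trans (le_abs_self _) (habs j0)
    have hlt := PF.eigB_lt hAs hBs hB0 hBA hirr hne hU1 hU2 hAU hV1 hV2 hBU hj0
    have hmono := PF.mono_all n A B hAs hBs hB0 hBA x0 x
      (PF.rayleigh_le hU1 hU2 hAU hj0) hx0x
    have hA0 : A.charpoly.eval x0 = 0 := by
      rw [PF.charpoly_eval_prod hU1 hU2 hAU]
      exact Finset.prod_eq_zero (Finset.mem_univ j0) (by simp [hx0def])
    have hBpos : 0 < B.charpoly.eval x0 := by
      rw [PF.charpoly_eval_prod hV1 hV2 hBU]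
      exact Finset.prod_pos fun i _ => sub_pos.mpr (hlt i)
    linarith
end

section
/- Let G and H be rooted weighted graphs with roots u and v respectively, and let G·H denote their coalescence (identify u with v, adding loop weights at the identified vertex). Then φ(G·H) = φ(G)·φ(H − v) + φ(G − u)·φ(H) − x·φ(G − u)·φ(H − v). -/
open Matrix Polynomial

/-- The coalescence of two rooted weighted graphs, given by their (possibly looped)
weighted adjacency matrices `G` (root `u`) and `H` (root `v`): the roots are identified
into the vertex `Sum.inl u`, whose loop weight is the sum of the two loop weights. -/
def coal {m k : ℕ} (G : Matrix (Fin (m + 1)) (Fin (m + 1)) ℝ)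
    (H : Matrix (Fin (k + 1)) (Fin (k + 1)) ℝ) (u : Fin (m + 1)) (v : Fin (k + 1)) :
    Matrix (Fin (m + 1) ⊕ Fin k) (Fin (m + 1) ⊕ Fin k) ℝ := fun x y =>
  match x, y with
  | Sum.inl i, Sum.inl i' => G i i' + (if i = u ∧ i' = u then H v v else 0)
  | Sum.inl i, Sum.inr j => if i = u then H v (v.succAbove j) else 0
  | Sum.inr j, Sum.inl i => if i = u then H (v.succAbove j) v else 0
  | Sum.inr j, Sum.inr j' => H (v.succAbove j) (v.succAbove j')

lemma charmatrix_submatrix_succAbove {R : Type*} [CommRing R] {k : ℕ}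
    (H : Matrix (Fin (k + 1)) (Fin (k + 1)) R) (v : Fin (k + 1)) :
    (charmatrix H).submatrix v.succAbove v.succAbove
      = charmatrix (H.submatrix v.succAbove v.succAbove) := by
  ext j j'
  simp [charmatrix_apply, Matrix.diagonal_apply, Fin.succAbove_right_inj]

lemma det_charmatrix_updateRow {R : Type*} [CommRing R] {k : ℕ}
    (H : Matrix (Fin (k + 1)) (Fin (k + 1)) R) (v : Fin (k + 1)) :
    ((charmatrix H).updateRow v (fun b => -(C (H v b)))).det
      = H.charpoly - X * (H.submatrix v.succAbove v.succAbove).charpoly := by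
  have hrow : ((fun b => (if v = b then (X : R[X]) else 0)) + fun b => -(C (H v b)))
      = charmatrix H v := by
    funext b
    by_cases h : v = b
    · subst h; simp [charmatrix_apply, Matrix.diagonal_apply, sub_eq_add_neg]
    · simp [charmatrix_apply, Matrix.diagonal_apply, h, sub_eq_add_neg]
  have hsplit := Matrix.det_updateRow_add (charmatrix H) v
      (fun b => (if v = b then (X : R[X]) else 0)) (fun b => -(C (H v b)))
  rw [hrow, Matrix.updateRow_eq_self] at hsplit
  have hP : ((charmatrix H).updateRow v (fun b => (if v = b then (X : R[X]) else 0))).det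
      = X * (H.submatrix v.succAbove v.succAbove).charpoly := by
    rw [Matrix.det_succ_row _ v, Finset.sum_eq_single v]
    · have h1 : (-1 : R[X]) ^ ((v : ℕ) + (v : ℕ)) = 1 := Even.neg_one_pow ⟨v, rfl⟩
      have h2 : ((charmatrix H).updateRow v
            (fun b => (if v = b then (X : R[X]) else 0))).submatrix v.succAbove v.succAbove
          = charmatrix (H.submatrix v.succAbove v.succAbove) := by
        rw [← charmatrix_submatrix_succAbove]
        ext a b
        simp [Matrix.updateRow_apply, Fin.succAbove_ne]
      rw [h2]
      simp [Matrix.updateRow_self, h1, Matrix.charpoly]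
    · intro b _ hb
      simp [Matrix.updateRow_self, (Ne.symm hb : v ≠ b)]
    · intro h; simp at h
  have : H.charpoly = (charmatrix H).det := rfl
  rw [this, hsplit, hP]
  ring

theorem stmt7 {m k : ℕ} (G : Matrix (Fin (m + 1)) (Fin (m + 1)) ℝ)
    (H : Matrix (Fin (k + 1)) (Fin (k + 1)) ℝ)
    (hG : G.IsSymm) (hH : H.IsSymm) (hG0 : ∀ i j, 0 ≤ G i j) (hH0 : ∀ i j, 0 ≤ H i j)
    (u : Fin (m + 1)) (v : Fin (k + 1)) :
    (coal G H u v).charpoly =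
      G.charpoly * (H.submatrix v.succAbove v.succAbove).charpoly +
        (G.submatrix u.succAbove u.succAbove).charpoly * H.charpoly -
          Polynomial.X * (G.submatrix u.succAbove u.succAbove).charpoly *
            (H.submatrix v.succAbove v.succAbove).charpoly := by
  classical
  clear hG hH hG0 hH0
  set H' := H.submatrix v.succAbove v.succAbove with hH'
  set G' := G.submatrix u.succAbove u.succAbove with hG'
  set M := charmatrix (coal G H u v) with hM
  have hMapp : ∀ x y, M x y
      = (if x = y then (X : ℝ[X]) else 0) - C (coal G H u v x y) := by
    intro x y
    rw [hM, charmatrix_apply, Matrix.diagonal_apply]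
  set rG : Fin (m + 1) ⊕ Fin k → ℝ[X] :=
    Sum.elim (fun i' => charmatrix G u i') (fun _ => 0) with hrG
  set rH : Fin (m + 1) ⊕ Fin k → ℝ[X] :=
    Sum.elim (fun i' => if i' = u then -C (H v v) else 0)
      (fun j => -C (H v (v.succAbove j))) with hrH
  have hrowsum : rG + rH = M (Sum.inl u) := by
    funext x
    rcases x with i' | j
    · by_cases h : i' = u
      · subst h
        simp [hrG, hrH, hMapp, coal, charmatrix_apply, Matrix.diagonal_apply, map_add]
        ring
      · simp [hrG, hrH, hMapp, coal, charmatrix_apply, Matrix.diagonal_apply, h,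
          (Ne.symm h : u ≠ i')]
    · simp [hrG, hrH, hMapp, coal]
  set M1 := M.updateRow (Sum.inl u) rG with hM1
  set M2 := M.updateRow (Sum.inl u) rH with hM2
  have hdet0 : M.det = M1.det + M2.det := by
    conv_lhs => rw [← Matrix.updateRow_eq_self M (Sum.inl u), ← hrowsum]
    exact Matrix.det_updateRow_add M (Sum.inl u) rG rH
  -- column splits
  set cG : Fin (m + 1) ⊕ Fin k → ℝ[X] :=
    Sum.elim (fun i => charmatrix G i u) (fun _ => 0) with hcG
  set cH : Fin (m + 1) ⊕ Fin k → ℝ[X] :=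
    Sum.elim (fun _ => 0) (fun j => -C (H (v.succAbove j) v)) with hcH
  have hcolsum1 : cG + cH = fun x => M1 x (Sum.inl u) := by
    funext x
    rcases x with i | j
    · by_cases h : i = u
      · subst h
        simp [hcG, hcH, hM1, Matrix.updateRow_apply, hrG]
      · simp [hcG, hcH, hM1, Matrix.updateRow_apply, h, hMapp, coal]
    · simp [hcG, hcH, hM1, Matrix.updateRow_apply, hMapp, coal]
  have hdet1 : M1.det = (M1.updateCol (Sum.inl u) cG).det
      + (M1.updateCol (Sum.inl u) cH).det := by
    conv_lhs => rw [← Matrix.updateCol_eq_self M1 (Sum.inl u), ← hcolsum1]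
    exact Matrix.det_updateCol_add M1 (Sum.inl u) cG cH
  set cG' : Fin (m + 1) ⊕ Fin k → ℝ[X] :=
    Sum.elim (fun i => if i = u then 0 else -C (G i u)) (fun _ => 0) with hcG'
  set cH' : Fin (m + 1) ⊕ Fin k → ℝ[X] :=
    Sum.elim (fun i => if i = u then -C (H v v) else 0)
      (fun j => -C (H (v.succAbove j) v)) with hcH'
  have hcolsum2 : cG' + cH' = fun x => M2 x (Sum.inl u) := by
    funext x
    rcases x with i | j
    · by_cases h : i = u
      · subst h
        simp [hcG', hcH', hM2, Matrix.updateRow_apply, hrH]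
      · simp [hcG', hcH', hM2, Matrix.updateRow_apply, h, hMapp, coal]
    · simp [hcG', hcH', hM2, Matrix.updateRow_apply, hMapp, coal]
  have hdet2 : M2.det = (M2.updateCol (Sum.inl u) cG').det
      + (M2.updateCol (Sum.inl u) cH').det := by
    conv_lhs => rw [← Matrix.updateCol_eq_self M2 (Sum.inl u), ← hcolsum2]
    exact Matrix.det_updateCol_add M2 (Sum.inl u) cG' cH'
  -- first block: φ(G) φ(H-v)
  have hM1a : M1.updateCol (Sum.inl u) cG
      = Matrix.fromBlocks (charmatrix G) 0 0 (charmatrix H') := by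
    ext x y
    rcases x with i | j <;> rcases y with i' | j'
    · by_cases h' : i' = u
      · subst h'
        simp [Matrix.updateCol_apply, hcG]
      · by_cases h : i = u
        · subst h
          simp [Matrix.updateCol_apply, h', hM1, Matrix.updateRow_apply, hrG]
        · simp [Matrix.updateCol_apply, h', hM1, Matrix.updateRow_apply, h, hMapp, coal,
            charmatrix_apply, Matrix.diagonal_apply]
    · by_cases h : i = u
      · subst h
        simp [Matrix.updateCol_apply, hM1, Matrix.updateRow_apply, hrG]
      · simp [Matrix.updateCol_apply, hM1, Matrix.updateRow_apply, h, hMapp, coal]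
    · by_cases h' : i' = u
      · subst h'
        simp [Matrix.updateCol_apply, hcG]
      · simp [Matrix.updateCol_apply, h', hM1, Matrix.updateRow_apply, hMapp, coal]
    · simp [Matrix.updateCol_apply, hM1, Matrix.updateRow_apply, hMapp, coal, hH',
        charmatrix_apply, Matrix.diagonal_apply, Fin.succAbove_right_inj]
  have hdet1a : (M1.updateCol (Sum.inl u) cG).det = G.charpoly * H'.charpoly := by
    rw [hM1a, Matrix.det_fromBlocks_zero₂₁]
    rfl
  -- second block: 0
  have hM1b : M1.updateCol (Sum.inl u) cH
      = Matrix.fromBlocks ((charmatrix G).updateCol u (fun _ => 0)) 0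
          (Matrix.of fun j i' => if i' = u then -C (H (v.succAbove j) v) else 0) (charmatrix H') := by
    ext x y
    rcases x with i | j <;> rcases y with i' | j'
    · by_cases h' : i' = u
      · subst h'
        simp [Matrix.updateCol_apply, hcH]
      · by_cases h : i = u
        · subst h
          simp [Matrix.updateCol_apply, h', hM1, Matrix.updateRow_apply, hrG]
        · simp [Matrix.updateCol_apply, h', hM1, Matrix.updateRow_apply, h, hMapp, coal,
            charmatrix_apply, Matrix.diagonal_apply]
    · by_cases h : i = u
      · subst h
        simp [Matrix.updateCol_apply, hM1, Matrix.updateRow_apply, hrG]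
      · simp [Matrix.updateCol_apply, hM1, Matrix.updateRow_apply, h, hMapp, coal]
    · by_cases h' : i' = u
      · subst h'
        simp [Matrix.updateCol_apply, hcH]
      · simp [Matrix.updateCol_apply, h', hM1, Matrix.updateRow_apply, hMapp, coal]
    · simp [Matrix.updateCol_apply, hM1, Matrix.updateRow_apply, hMapp, coal, hH',
        charmatrix_apply, Matrix.diagonal_apply, Fin.succAbove_right_inj]
  have hdet1b : (M1.updateCol (Sum.inl u) cH).det = 0 := by
    rw [hM1b, Matrix.det_fromBlocks_zero₁₂,
      Matrix.det_eq_zero_of_column_eq_zero u (fun i => by simp [Matrix.updateCol_apply]),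
      zero_mul]
  -- third block: 0
  have hM2a : M2.updateCol (Sum.inl u) cG'
      = Matrix.fromBlocks
          (Matrix.of fun i i' => if i = u then 0 else if i' = u then -C (G i u) else charmatrix G i i')
          (Matrix.of fun i j => if i = u then -C (H v (v.succAbove j)) else 0)
          0 (charmatrix H') := by
    ext x y
    rcases x with i | j <;> rcases y with i' | j'
    · by_cases h' : i' = u
      · subst h'
        simp [Matrix.updateCol_apply, hcG']
      · by_cases h : i = u
        · subst h
          simp [Matrix.updateCol_apply, h', hM2, Matrix.updateRow_apply, hrH]
        · simp [Matrix.updateCol_apply, h', hM2, Matrix.updateRow_apply, h, hMapp, coal,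
            charmatrix_apply, Matrix.diagonal_apply]
    · by_cases h : i = u
      · subst h
        simp [Matrix.updateCol_apply, hM2, Matrix.updateRow_apply, hrH]
      · simp [Matrix.updateCol_apply, hM2, Matrix.updateRow_apply, h, hMapp, coal]
    · by_cases h' : i' = u
      · subst h'
        simp [Matrix.updateCol_apply, hcG']
      · simp [Matrix.updateCol_apply, h', hM2, Matrix.updateRow_apply, hMapp, coal]
    · simp [Matrix.updateCol_apply, hM2, Matrix.updateRow_apply, hMapp, coal, hH',
        charmatrix_apply, Matrix.diagonal_apply, Fin.succAbove_right_inj]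
  have hdet2a : (M2.updateCol (Sum.inl u) cG').det = 0 := by
    rw [hM2a, Matrix.det_fromBlocks_zero₂₁,
      Matrix.det_eq_zero_of_row_eq_zero u (fun j => by simp), zero_mul]
  -- fourth block: φ(G-u) (φ(H) - X φ(H-v))
  set N : Matrix (Fin (k + 1)) (Fin (k + 1)) ℝ[X] :=
    (charmatrix H).updateRow v (fun b => -(C (H v b))) with hN
  set e : Fin m ⊕ Fin (k + 1) ≃ Fin (m + 1) ⊕ Fin k :=
    { toFun := Sum.elim (fun a => Sum.inl (u.succAbove a))
        (fun b => (finSuccEquiv' v b).elim (Sum.inl u) Sum.inr)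
      invFun := Sum.elim (fun i => ((finSuccEquiv' u) i).elim (Sum.inr v) Sum.inl)
        (fun j => Sum.inr (v.succAbove j))
      left_inv := by
        rintro (a | b)
        · simp
        · by_cases hb : b = v
          · subst hb; simp
          · obtain ⟨j, rfl⟩ := Fin.exists_succAbove_eq hb
            simp
      right_inv := by
        rintro (i | j)
        · by_cases hi : i = u
          · subst hi; simp
          · obtain ⟨a, rfl⟩ := Fin.exists_succAbove_eq hi
            simp
        · simp } with he
  have hevalinl : ∀ a : Fin m, e (Sum.inl a) = Sum.inl (u.succAbove a) := fun a => rfl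
  have hevalv : e (Sum.inr v) = Sum.inl u := by simp [he]
  have hevalinr : ∀ j : Fin k, e (Sum.inr (v.succAbove j)) = Sum.inr j := fun j => by
    simp [he]
  have hM2b : (M2.updateCol (Sum.inl u) cH').submatrix e e
      = Matrix.fromBlocks (charmatrix G') 0 0 N := by
    ext x y
    rcases x with a | b <;> rcases y with a' | b'
    · simp [Matrix.submatrix_apply, hevalinl, Matrix.updateCol_apply, Fin.succAbove_ne,
        hM2, Matrix.updateRow_apply, hMapp, coal, hG',
        charmatrix_apply, Matrix.diagonal_apply, Fin.succAbove_right_inj]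
    · by_cases hb : b' = v
      · subst hb
        simp [Matrix.submatrix_apply, hevalinl, hevalv, Matrix.updateCol_apply,
          Fin.succAbove_ne, hcH']
      · obtain ⟨j, rfl⟩ := Fin.exists_succAbove_eq hb
        simp [Matrix.submatrix_apply, hevalinl, hevalinr, Matrix.updateCol_apply,
          Fin.succAbove_ne, hM2, Matrix.updateRow_apply, hMapp, coal]
    · by_cases hb : b = v
      · subst hb
        simp [Matrix.submatrix_apply, hevalinl, hevalv, Matrix.updateCol_apply,
          Fin.succAbove_ne, hM2, Matrix.updateRow_apply, hrH]
      · obtain ⟨j, rfl⟩ := Fin.exists_succAbove_eq hb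
        simp [Matrix.submatrix_apply, hevalinl, hevalinr, Matrix.updateCol_apply,
          Fin.succAbove_ne, hM2, Matrix.updateRow_apply, hMapp, coal]
    · by_cases hb : b = v <;> by_cases hb' : b' = v
      · subst hb; subst hb'
        simp [Matrix.submatrix_apply, hevalv, Matrix.updateCol_apply, hcH', hN,
          Matrix.updateRow_apply]
      · obtain ⟨j', rfl⟩ := Fin.exists_succAbove_eq hb'
        subst hb
        simp [Matrix.submatrix_apply, hevalv, hevalinr, Matrix.updateCol_apply, hM2,
          Matrix.updateRow_apply, hrH, hN]
      · obtain ⟨j, rfl⟩ := Fin.exists_succAbove_eq hb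
        subst hb'
        simp [Matrix.submatrix_apply, hevalv, hevalinr, Matrix.updateCol_apply, hcH', hN,
          Matrix.updateRow_apply, Fin.succAbove_ne, charmatrix_apply, Matrix.diagonal_apply]
      · obtain ⟨j, rfl⟩ := Fin.exists_succAbove_eq hb
        obtain ⟨j', rfl⟩ := Fin.exists_succAbove_eq hb'
        simp [Matrix.submatrix_apply, hevalinr, Matrix.updateCol_apply, hM2,
          Matrix.updateRow_apply, hMapp, coal, hN, Fin.succAbove_ne,
          charmatrix_apply, Matrix.diagonal_apply, Fin.succAbove_right_inj]
  have hdet2b : (M2.updateCol (Sum.inl u) cH').det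
      = G'.charpoly * (H.charpoly - X * H'.charpoly) := by
    rw [← Matrix.det_submatrix_equiv_self e, hM2b, Matrix.det_fromBlocks_zero₂₁]
    rw [hN, det_charmatrix_updateRow]
    rfl
  have hchar : (coal G H u v).charpoly = M.det := rfl
  rw [hchar, hdet0, hdet1, hdet2, hdet1a, hdet1b, hdet2a, hdet2b]
  ring
end

section
/- Let a = (a₁,...,a_k) be a nondecreasing sequence of positive integers and suppose there are indices i+1 ≤ j₁ < j₂ ≤ k with a_{j₂} − a_{j₁} ≥ 2. Choose j₁ maximal and j₂ minimal with this property. Define p by p_{j₁} = a_{j₁}+1, p_{j₂} = a_{j₂}−1, and p_j = a_j otherwise. Then p is again a nondecreasing sequence of positive integers with the same sum, and a strictly precedes p in lexicographic order while p strictly precedes any nondecreasing sequence b of the same length and sum satisfying b_j = a_j for j < i, b_i = ⋯ = b_{k−1} = a_i + 1 and b_k > a_k whenever a_i = a_{i+1} and a_k ≥ a_i + 3. -/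
lemma sum_eq_range_getD (l : List ℕ) :
    l.sum = ∑ j ∈ Finset.range l.length, l.getD j 0 := by
  induction l with
  | nil => simp
  | cons x t ih =>
      rw [List.length_cons, Finset.sum_range_succ']
      simp [ih, Nat.add_comm]

lemma lex_of_getD (m : ℕ) : ∀ (l₁ l₂ : List ℕ),
    (∀ j < m, l₁.getD j 0 = l₂.getD j 0) → l₁.getD m 0 < l₂.getD m 0 →
    List.Lex (· < ·) l₁ l₂ := by
  induction m with
  | zero =>
      intro l₁ l₂ _ hlt
      match l₂ with
      | [] => simp [List.getD] at hlt
      | y :: t₂ =>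
          match l₁ with
          | [] => exact List.Lex.nil
          | x :: t₁ => exact List.Lex.rel (by simpa using hlt)
  | succ m ih =>
      intro l₁ l₂ heq hlt
      match l₂ with
      | [] => simp [List.getD] at hlt
      | y :: t₂ =>
          match l₁ with
          | [] => exact List.Lex.nil
          | x :: t₁ =>
              have h0 := heq 0 (Nat.succ_pos m)
              simp at h0
              subst h0
              exact List.Lex.cons (ih t₁ t₂
                (fun j hj => by simpa using heq (j + 1) (by omega))
                (by simpa using hlt))

lemma getD_mono (l : List ℕ) (hs : l.Pairwise (· ≤ ·)) {m n : ℕ} (hmn : m ≤ n)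
    (hn : n < l.length) : l.getD m 0 ≤ l.getD n 0 := by
  rcases eq_or_lt_of_le hmn with rfl | h
  · exact le_refl _
  · have := List.pairwise_iff_get.1 hs ⟨m, by omega⟩ ⟨n, hn⟩ h
    rw [List.getD_eq_getElem l 0 (by omega : m < l.length), List.getD_eq_getElem l 0 hn]
    simpa using this

lemma sorted_of_getD (l : List ℕ)
    (h : ∀ m n, m < n → n < l.length → l.getD m 0 ≤ l.getD n 0) :
    l.Pairwise (· ≤ ·) := by
  rw [List.pairwise_iff_get]
  intro i j hij
  have := h i j hij j.isLt
  rwa [List.getD_eq_getElem l 0 (by omega : (i : ℕ) < l.length),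
    List.getD_eq_getElem l 0 j.isLt] at this

theorem stmt13 (k i j₁ j₂ : ℕ) (a p : List ℕ)
    (hal : a.length = k) (hasort : a.Pairwise (· ≤ ·)) (hapos : ∀ x ∈ a, 0 < x)
    -- indices with `a_{j₂} - a_{j₁} ≥ 2`, `i + 1 ≤ j₁ < j₂ ≤ k` (0-indexed: `j₂ < k`)
    (hij : i + 1 ≤ j₁) (hj12 : j₁ < j₂) (hj2k : j₂ < k)
    (hgap : a.getD j₁ 0 + 2 ≤ a.getD j₂ 0)
    -- `j₁` maximal and `j₂` minimal with this property
    (hmax : ∀ p' q', i + 1 ≤ p' → p' < q' → q' < k → a.getD p' 0 + 2 ≤ a.getD q' 0 → p' ≤ j₁)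
    (hmin : ∀ q', j₁ < q' → q' < k → a.getD j₁ 0 + 2 ≤ a.getD q' 0 → j₂ ≤ q')
    -- the exchanged sequence `p`
    (hpl : p.length = k)
    (hpj1 : p.getD j₁ 0 = a.getD j₁ 0 + 1) (hpj2 : p.getD j₂ 0 = a.getD j₂ 0 - 1)
    (hpo : ∀ j < k, j ≠ j₁ → j ≠ j₂ → p.getD j 0 = a.getD j 0)
    -- the situation of Claim A: `a_i = a_{i+1}` and `a_k ≥ a_i + 3`
    (hii : a.getD i 0 = a.getD (i + 1) 0) (hak : a.getD i 0 + 3 ≤ a.getD (k - 1) 0) :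
    p.Pairwise (· ≤ ·) ∧ (∀ x ∈ p, 0 < x) ∧ p.sum = a.sum ∧ List.Lex (· < ·) a p ∧
    ∀ b : List ℕ, b.length = k → b.Pairwise (· ≤ ·) → (∀ x ∈ b, 0 < x) → b.sum = a.sum →
      (∀ j < i, b.getD j 0 = a.getD j 0) →
      (∀ j, i ≤ j → j < k - 1 → b.getD j 0 = a.getD i 0 + 1) →
      a.getD (k - 1) 0 < b.getD (k - 1) 0 →
      List.Lex (· < ·) p b := by
  have hmono : ∀ m n, m ≤ n → n < k → a.getD m 0 ≤ a.getD n 0 := by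
    intro m n hmn hn
    exact getD_mono a hasort hmn (by omega)
  -- entries strictly between j₁ and j₂ are bounded
  have hB1 : ∀ q, j₁ < q → q < j₂ → a.getD q 0 ≤ a.getD j₁ 0 + 1 := by
    intro q h1 h2
    by_contra h
    have := hmin q h1 (by omega) (by omega)
    omega
  have hB2 : ∀ q, j₁ < q → q < j₂ → a.getD j₁ 0 + 1 ≤ a.getD q 0 := by
    intro q h1 h2
    by_contra h
    have := hmax q j₂ (by omega) h2 hj2k (by omega)
    omega
  have hsorted : p.Pairwise (· ≤ ·) := by
    apply sorted_of_getD
    intro m n hmn hn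
    rw [hpl] at hn
    rcases eq_or_ne m j₁ with rfl | hm1
    · rcases eq_or_ne n j₂ with rfl | hn2
      · rw [hpj1, hpj2]; omega
      · rw [hpj1, hpo n hn (by omega) hn2]
        rcases lt_or_gt_of_ne hn2 with h | h
        · have := hB2 n hmn h; omega
        · have := hmono j₂ n (by omega) hn
          omega
    · rcases eq_or_ne m j₂ with rfl | hm2
      · have hne1 : n ≠ j₁ := by omega
        have hne2 : n ≠ m := by omega
        rw [hpj2, hpo n hn hne1 hne2]
        have := hmono m n (by omega) hn
        omega
      · rw [hpo m (by omega) hm1 hm2]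
        rcases eq_or_ne n j₁ with rfl | hn1
        · rw [hpj1]
          have := hmono m n (by omega) (by omega)
          omega
        · rcases eq_or_ne n j₂ with rfl | hn2
          · rw [hpj2]
            rcases lt_or_gt_of_ne hm1 with h | h
            · have := hmono m j₁ (by omega) (by omega); omega
            · have := hB1 m h (by omega); omega
          · rw [hpo n hn hn1 hn2]
            exact hmono m n (le_of_lt hmn) hn
  have hapos' : ∀ m < k, 0 < a.getD m 0 := by
    intro m hm
    rw [List.getD_eq_getElem a 0 (by omega : m < a.length)]
    exact hapos _ (List.getElem_mem _)
  have hpos : ∀ x ∈ p, 0 < x := by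
    intro x hx
    obtain ⟨n, hn, rfl⟩ := List.mem_iff_getElem.1 hx
    rw [← List.getD_eq_getElem p 0 hn]
    have hn' : n < k := hpl ▸ hn
    rcases eq_or_ne n j₁ with rfl | h1
    · rw [hpj1]; omega
    · rcases eq_or_ne n j₂ with rfl | h2
      · rw [hpj2]
        have := hapos' j₁ (by omega)
        omega
      · rw [hpo n hn' h1 h2]
        exact hapos' n hn'
  have hsum : p.sum = a.sum := by
    rw [sum_eq_range_getD, sum_eq_range_getD, hal, hpl]
    have hj1mem : j₁ ∈ Finset.range k := Finset.mem_range.2 (by omega)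
    have hj2mem : j₂ ∈ (Finset.range k).erase j₁ :=
      Finset.mem_erase.2 ⟨by omega, Finset.mem_range.2 hj2k⟩
    rw [← Finset.add_sum_erase _ (fun j => p.getD j 0) hj1mem,
        ← Finset.add_sum_erase _ (fun j => p.getD j 0) hj2mem,
        ← Finset.add_sum_erase _ (fun j => a.getD j 0) hj1mem,
        ← Finset.add_sum_erase _ (fun j => a.getD j 0) hj2mem]
    have hrest : ∑ j ∈ ((Finset.range k).erase j₁).erase j₂, p.getD j 0 =
        ∑ j ∈ ((Finset.range k).erase j₁).erase j₂, a.getD j 0 := by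
      apply Finset.sum_congr rfl
      intro j hj
      simp only [Finset.mem_erase, Finset.mem_range] at hj
      exact hpo j hj.2.2 hj.2.1 hj.1
    rw [hrest, hpj1, hpj2]
    omega
  refine ⟨hsorted, hpos, hsum, ?_, ?_⟩
  · apply lex_of_getD j₁
    · intro j hj
      exact (hpo j (by omega) (by omega) (by omega)).symm
    · rw [hpj1]; omega
  · intro b hbl hbsort hbpos hbsum hblo hbmid hbk
    apply lex_of_getD i
    · intro j hj
      rw [hpo j (by omega) (by omega) (by omega), hblo j hj]
    · rw [hpo i (by omega) (by omega) (by omega), hbmid i le_rfl (by omega)]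
      omega
end
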